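/- Let q be a power of an odd prime p, let 𝔽_q be the finite field with q elements, let K be an algebraic closure of 𝔽_q, and let σ : K → K be the Frobenius map σ(x) = x^q. Let λ ∈ 𝔽_q^× have multiplicative order m > 1, and let n be a positive integer. Then the number of n-element subsets S ⊆ K \ {0} with σ(S) = S and λ·S = S equals the number of (n/m)-element subsets T ⊆ K \ {0} with σ(T) = T if m divides n, and equals 0 otherwise. Moreover, when m divides n, the number of such S containing at least one element of 𝔽_q^× equals the number of (n/m)-element subsets T ⊆ K \ {0} with σ(T) = T containing at least one element of the set {a^m : a ∈ 𝔽_q^×} of m-th powers in 𝔽_q^× (a set of (q−1)/m elements). -/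

import Mathlib

section Aux

variable {K : Type*} [Field K] [DecidableEq K]

lemma aux_closure {f : K → K} (hf : Function.Injective f) (S : Finset K) :
    S.image f = S ↔ ∀ x ∈ S, f x ∈ S := by
  constructor
  · intro h x hx
    rw [← h]
    exact Finset.mem_image_of_mem f hx
  · intro h
    apply Finset.eq_of_subset_of_card_le
    · intro y hy
      obtain ⟨x, hx, rfl⟩ := Finset.mem_image.mp hy
      exact h x hx
    · rw [Finset.card_image_of_injective _ hf]

variable {l : K} {m : ℕ}

lemma aux_orb (hl0 : l ≠ 0) (S : Finset K) (hS : S.image (fun x => l * x) = S)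
    (i : ℕ) : ∀ x ∈ S, l ^ i * x ∈ S := by
  have hlmul : Function.Injective (fun x : K => l * x) :=
    fun a b h => mul_left_cancel₀ hl0 h
  induction i with
  | zero => simpa using fun x hx => hx
  | succ i ih =>
    intro x hx
    have h1 := (aux_closure hlmul S).mp hS _ (ih x hx)
    have h2 : l ^ (i + 1) * x = l * (l ^ i * x) := by ring
    rw [h2]
    exact h1

lemma aux_pow_inj (hl0 : l ≠ 0) (hord : orderOf l = m) :
    ∀ i < m, ∀ j < m, l ^ i = l ^ j → i = j := by
  have key : ∀ i j, i ≤ j → j < m → l ^ i = l ^ j → i = j := by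
    intro i j hij hjm heq
    have h1 : l ^ i * l ^ (j - i) = l ^ i * 1 := by
      rw [mul_one, ← pow_add, Nat.add_sub_cancel' hij, heq]
    have h2 : l ^ (j - i) = 1 := mul_left_cancel₀ (pow_ne_zero i hl0) h1
    have h3 := orderOf_dvd_of_pow_eq_one h2
    rw [hord] at h3
    have h4 : j - i = 0 := Nat.eq_zero_of_dvd_of_lt h3 (by omega) |>.symm ▸ rfl
    omega
  intro i hi j hj heq
  rcases le_total i j with h | h
  · exact key i j h hj heq
  · exact (key j i h hi heq.symm).symm

lemma aux_mem_of_pow_mem (hm0 : 0 < m) (hl0 : l ≠ 0) (hprim : IsPrimitiveRoot l m)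
    (S : Finset K) (h0 : (0 : K) ∉ S) (hS : S.image (fun x => l * x) = S)
    (x : K) (hx : x ^ m ∈ S.image (fun y => y ^ m)) : x ∈ S := by
  haveI : NeZero m := ⟨hm0.ne'⟩
  obtain ⟨s, hs, hsm⟩ := Finset.mem_image.mp hx
  have hs0 : s ≠ 0 := fun h => h0 (h ▸ hs)
  have h1 : (x / s) ^ m = 1 := by
    rw [div_pow, ← hsm, div_self (pow_ne_zero m hs0)]
  obtain ⟨i, _, hi⟩ := hprim.eq_pow_of_pow_eq_one h1
  have hx' : x = l ^ i * s := ((eq_div_iff hs0).mp hi).symm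
  rw [hx']
  exact aux_orb hl0 S hS i s hs

lemma aux_filter (hm0 : 0 < m) (hl0 : l ≠ 0) (hprim : IsPrimitiveRoot l m)
    (S : Finset K) (h0 : (0 : K) ∉ S) (hS : S.image (fun x => l * x) = S)
    (s : K) (hs : s ∈ S) :
    S.filter (fun t => t ^ m = s ^ m) = (Finset.range m).image (fun i => l ^ i * s) := by
  haveI : NeZero m := ⟨hm0.ne'⟩
  have hs0 : s ≠ 0 := fun h => h0 (h ▸ hs)
  ext t
  simp only [Finset.mem_filter, Finset.mem_image, Finset.mem_range]
  constructor
  · rintro ⟨ht, htm⟩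
    have h1 : (t / s) ^ m = 1 := by
      rw [div_pow, htm, div_self (pow_ne_zero m hs0)]
    obtain ⟨i, him, hi⟩ := hprim.eq_pow_of_pow_eq_one h1
    exact ⟨i, him, ((eq_div_iff hs0).mp hi)⟩
  · rintro ⟨i, _, rfl⟩
    refine ⟨aux_orb hl0 S hS i s hs, ?_⟩
    rw [mul_pow, ← pow_mul, mul_comm i m, pow_mul, hprim.pow_eq_one, one_pow, one_mul]

lemma aux_card (hm0 : 0 < m) (hl0 : l ≠ 0) (hord : orderOf l = m)
    (hprim : IsPrimitiveRoot l m)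
    (S : Finset K) (h0 : (0 : K) ∉ S) (hS : S.image (fun x => l * x) = S) :
    S.card = (S.image (fun x => x ^ m)).card * m := by
  rw [Finset.card_eq_sum_card_image (fun x => x ^ m)]
  have hconst : ∀ b ∈ S.image (fun x => x ^ m),
      (S.filter (fun a => a ^ m = b)).card = m := by
    intro b hb
    obtain ⟨s, hsS, rfl⟩ := Finset.mem_image.mp hb
    have hs0 : s ≠ 0 := fun h => h0 (h ▸ hsS)
    rw [aux_filter hm0 hl0 hprim S h0 hS s hsS]
    rw [Finset.card_image_of_injOn, Finset.card_range]
    intro i hi j hj hij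
    simp only [Finset.coe_range, Set.mem_Iio] at hi hj
    have h1 : l ^ i = l ^ j := mul_right_cancel₀ hs0 hij
    exact aux_pow_inj hl0 hord i hi j hj h1
  rw [Finset.sum_congr rfl hconst, Finset.sum_const, smul_eq_mul]

end Aux

theorem stmt3 (p e q : ℕ) (hp : p.Prime) (hodd : Odd p) (he : 0 < e) (hq : q = p ^ e)
    (F K : Type*) [Field F] [Fintype F] (hF : Fintype.card F = q)
    [Field K] [DecidableEq K] [Algebra F K] [IsAlgClosure F K]
    (lam : F) (hlam : lam ≠ 0) (m : ℕ) (hm : 1 < m) (hord : orderOf lam = m)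
    (n : ℕ) (hn : 0 < n) :
    ({S : Finset K | S.card = n ∧ (0 : K) ∉ S ∧ S.image (fun x => x ^ q) = S ∧
          S.image (fun x => algebraMap F K lam * x) = S}.ncard
        = if m ∣ n then
            {T : Finset K | T.card = n / m ∧ (0 : K) ∉ T ∧
              T.image (fun x => x ^ q) = T}.ncard
          else 0)
    ∧ (m ∣ n →
        {S : Finset K | S.card = n ∧ (0 : K) ∉ S ∧ S.image (fun x => x ^ q) = S ∧
            S.image (fun x => algebraMap F K lam * x) = S ∧
            ∃ a : F, a ≠ 0 ∧ algebraMap F K a ∈ S}.ncard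
          = {T : Finset K | T.card = n / m ∧ (0 : K) ∉ T ∧
              T.image (fun x => x ^ q) = T ∧
              ∃ a : F, a ≠ 0 ∧ algebraMap F K (a ^ m) ∈ T}.ncard) := by
  classical
  haveI : IsAlgClosed K := IsAlgClosure.isAlgClosed F
  set l : K := algebraMap F K lam with hldef
  have hm0 : 0 < m := by omega
  have hq0 : 0 < q := by rw [hq]; exact pow_pos hp.pos e
  have hinjF : Function.Injective (algebraMap F K) := (algebraMap F K).injective
  have hl0 : l ≠ 0 := by
    rw [hldef, Ne, map_eq_zero_iff _ hinjF]
    exact hlam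
  have hlord : orderOf l = m := by
    rw [hldef, ← hord]
    exact orderOf_injective (algebraMap F K).toMonoidHom hinjF lam
  have hprim : IsPrimitiveRoot l m := hlord ▸ IsPrimitiveRoot.orderOf l
  -- characteristic p on K, Frobenius injective
  have hcharF : CharP F p := by
    obtain ⟨r, hr⟩ := CharP.exists F
    haveI := hr
    have hr' : r.Prime := CharP.char_is_prime F r
    obtain ⟨k, _, hcard⟩ := FiniteField.card F r
    have hdvd : p ∣ r ^ (k : ℕ) := by
      rw [← hcard, hF, hq]
      exact dvd_pow_self p (by omega)
    have hpr : p ∣ r := hp.dvd_of_dvd_pow hdvd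
    have : p = r := (Nat.prime_dvd_prime_iff_eq hp hr').mp hpr
    rwa [this]
  haveI := hcharF
  haveI : CharP K p := charP_of_injective_algebraMap hinjF p
  haveI : Fact p.Prime := ⟨hp⟩
  have hqinj : Function.Injective (fun x : K => x ^ q) := by
    intro x y hxy
    simp only at hxy
    have h1 : (x - y) ^ q = 0 := by
      rw [hq, sub_pow_char_pow, ← hq, hxy, sub_self]
    have h2 : x - y = 0 := pow_eq_zero_iff hq0.ne' |>.mp h1
    exact sub_eq_zero.mp h2
  have hlmul : Function.Injective (fun x : K => l * x) :=
    fun a b h => mul_left_cancel₀ hl0 h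
  -- preimage finset
  set Pre : Finset K → Finset K :=
    fun T => T.biUnion (fun y => (Polynomial.nthRoots m y).toFinset) with hPre
  have hmemPre : ∀ T : Finset K, ∀ x : K, x ∈ Pre T ↔ x ^ m ∈ T := by
    intro T x
    simp only [hPre, Finset.mem_biUnion, Multiset.mem_toFinset,
      Polynomial.mem_nthRoots hm0]
    constructor
    · rintro ⟨y, hy, rfl⟩; exact hy
    · intro h; exact ⟨x ^ m, h, rfl⟩
  have himgPre : ∀ T : Finset K, (Pre T).image (fun x => x ^ m) = T := by
    intro T
    ext y
    simp only [Finset.mem_image]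
    constructor
    · rintro ⟨x, hx, rfl⟩
      exact (hmemPre T x).mp hx
    · intro hy
      obtain ⟨z, hz⟩ := IsAlgClosed.exists_pow_nat_eq y hm0
      exact ⟨z, (hmemPre T z).mpr (hz ▸ hy), hz⟩
  -- good S properties
  have hgood0 : ∀ T : Finset K, (0 : K) ∉ T → (0 : K) ∉ Pre T := by
    intro T h0 h
    rw [hmemPre, zero_pow hm0.ne'] at h
    exact h0 h
  have hgoodl : ∀ T : Finset K, (Pre T).image (fun x => l * x) = Pre T := by
    intro T
    rw [aux_closure hlmul]
    intro x hx
    rw [hmemPre] at hx ⊢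
    rw [mul_pow, hprim.pow_eq_one, one_mul]
    exact hx
  have hgoodq : ∀ T : Finset K, T.image (fun x => x ^ q) = T →
      (Pre T).image (fun x => x ^ q) = Pre T := by
    intro T hT
    rw [aux_closure hqinj]
    intro x hx
    rw [hmemPre] at hx ⊢
    rw [← pow_mul, mul_comm q m, pow_mul]
    rw [← hT]
    exact Finset.mem_image_of_mem _ hx
  -- injectivity on lambda-stable 0-free sets
  have hinj : ∀ S₁ S₂ : Finset K, (0 : K) ∉ S₁ → S₁.image (fun x => l * x) = S₁ →
      (0 : K) ∉ S₂ → S₂.image (fun x => l * x) = S₂ →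
      S₁.image (fun x => x ^ m) = S₂.image (fun x => x ^ m) → S₁ = S₂ := by
    intro S₁ S₂ h01 hl1 h02 hl2 heq
    ext x
    constructor
    · intro hx
      refine aux_mem_of_pow_mem hm0 hl0 hprim S₂ h02 hl2 x ?_
      rw [← heq]
      exact Finset.mem_image_of_mem _ hx
    · intro hx
      refine aux_mem_of_pow_mem hm0 hl0 hprim S₁ h01 hl1 x ?_
      rw [heq]
      exact Finset.mem_image_of_mem _ hx
  constructor
  · by_cases hdvd : m ∣ n
    · rw [if_pos hdvd]
      have himg : (fun S : Finset K => S.image (fun x => x ^ m)) ''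
          {S : Finset K | S.card = n ∧ (0 : K) ∉ S ∧ S.image (fun x => x ^ q) = S ∧
            S.image (fun x => l * x) = S}
          = {T : Finset K | T.card = n / m ∧ (0 : K) ∉ T ∧
              T.image (fun x => x ^ q) = T} := by
        ext T
        simp only [Set.mem_image, Set.mem_setOf_eq]
        constructor
        · rintro ⟨S, ⟨hcard, h0, hsig, hlam'⟩, rfl⟩
          refine ⟨?_, ?_, ?_⟩
          · have := aux_card hm0 hl0 hlord hprim S h0 hlam'
            rw [hcard] at this
            rw [this, Nat.mul_div_cancel _ hm0]
          · intro h
            obtain ⟨x, hx, hxm⟩ := Finset.mem_image.mp h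
            exact h0 ((pow_eq_zero_iff hm0.ne' |>.mp hxm) ▸ hx)
          · rw [Finset.image_image]
            rw [show ((fun x : K => x ^ q) ∘ fun x => x ^ m)
                = ((fun x : K => x ^ m) ∘ fun x => x ^ q) by
              funext x; simp [← pow_mul, mul_comm]]
            rw [← Finset.image_image, hsig]
        · rintro ⟨hcard, h0, hsig⟩
          refine ⟨Pre T, ⟨?_, hgood0 T h0, hgoodq T hsig, hgoodl T⟩, himgPre T⟩
          have := aux_card hm0 hl0 hlord hprim (Pre T) (hgood0 T h0) (hgoodl T)
          rw [himgPre T, hcard, Nat.div_mul_cancel hdvd] at this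
          exact this
      rw [← himg]
      rw [Set.ncard_image_of_injOn]
      intro S₁ hS₁ S₂ hS₂ heq
      exact hinj S₁ S₂ hS₁.2.1 hS₁.2.2.2 hS₂.2.1 hS₂.2.2.2 heq
    · rw [if_neg hdvd]
      have hempty : {S : Finset K | S.card = n ∧ (0 : K) ∉ S ∧
          S.image (fun x => x ^ q) = S ∧ S.image (fun x => l * x) = S}
          = (∅ : Set (Finset K)) := by
        rw [Set.eq_empty_iff_forall_notMem]
        rintro S ⟨hcard, h0, _, hlam'⟩
        have := aux_card hm0 hl0 hlord hprim S h0 hlam'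
        rw [hcard] at this
        exact hdvd ⟨_, by rw [this, mul_comm]⟩
      rw [hempty, Set.ncard_empty]
  · intro hdvd
    have himg : (fun S : Finset K => S.image (fun x => x ^ m)) ''
        {S : Finset K | S.card = n ∧ (0 : K) ∉ S ∧ S.image (fun x => x ^ q) = S ∧
          S.image (fun x => l * x) = S ∧ ∃ a : F, a ≠ 0 ∧ algebraMap F K a ∈ S}
        = {T : Finset K | T.card = n / m ∧ (0 : K) ∉ T ∧
            T.image (fun x => x ^ q) = T ∧
            ∃ a : F, a ≠ 0 ∧ algebraMap F K (a ^ m) ∈ T} := by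
      ext T
      simp only [Set.mem_image, Set.mem_setOf_eq]
      constructor
      · rintro ⟨S, ⟨hcard, h0, hsig, hlam', a, ha0, haS⟩, rfl⟩
        refine ⟨?_, ?_, ?_, a, ha0, ?_⟩
        · have := aux_card hm0 hl0 hlord hprim S h0 hlam'
          rw [hcard] at this
          rw [this, Nat.mul_div_cancel _ hm0]
        · intro h
          obtain ⟨x, hx, hxm⟩ := Finset.mem_image.mp h
          exact h0 ((pow_eq_zero_iff hm0.ne' |>.mp hxm) ▸ hx)
        · rw [Finset.image_image]
          rw [show ((fun x : K => x ^ q) ∘ fun x => x ^ m)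
              = ((fun x : K => x ^ m) ∘ fun x => x ^ q) by
            funext x; simp [← pow_mul, mul_comm]]
          rw [← Finset.image_image, hsig]
        · rw [map_pow]
          exact Finset.mem_image_of_mem _ haS
      · rintro ⟨hcard, h0, hsig, a, ha0, haT⟩
        refine ⟨Pre T, ⟨?_, hgood0 T h0, hgoodq T hsig, hgoodl T, a, ha0, ?_⟩, himgPre T⟩
        · have := aux_card hm0 hl0 hlord hprim (Pre T) (hgood0 T h0) (hgoodl T)
          rw [himgPre T, hcard, Nat.div_mul_cancel hdvd] at this
          exact this
        · rw [hmemPre, ← map_pow]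
          exact haT
    rw [← himg]
    rw [Set.ncard_image_of_injOn]
    intro S₁ hS₁ S₂ hS₂ heq
    exact hinj S₁ S₂ hS₁.2.1 hS₁.2.2.2.1 hS₂.2.1 hS₂.2.2.2.1 heq
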